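/- Let a ≤ b be real numbers, let y₁, …, yₙ ∈ [a,b], and let w₁, …, wₙ be positive weights with ∑_{k=1}^n w_k = 1. If φ is a convex function on [a,b], then φ(a + b − ∑_{k=1}^n w_k y_k) ≤ φ(a) + φ(b) − ∑_{k=1}^n w_k φ(y_k). -/

import Mathlib

lemma mercer_pointwise (a b : ℝ) (hab : a ≤ b) (φ : ℝ → ℝ)
    (hφ : ConvexOn ℝ (Set.Icc a b) φ) {y : ℝ} (hy : y ∈ Set.Icc a b) :
    φ (a + b - y) + φ y ≤ φ a + φ b := by
  rcases eq_or_lt_of_le hab with h | h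
  · subst h
    have : y = a := le_antisymm hy.2 hy.1
    subst this
    simp
  · set t : ℝ := (b - y) / (b - a) with ht
    have hba : (0:ℝ) < b - a := by linarith
    have ht0 : 0 ≤ t := div_nonneg (by linarith [hy.2]) hba.le
    have ht1 : t ≤ 1 := by
      rw [div_le_one hba]; linarith [hy.1]
    have hs : t + (1 - t) = 1 := by ring
    have hy1 : t * a + (1 - t) * b = y := by
      field_simp [ht]
      have htb : t * (b - a) = b - y := by rw [ht]; exact div_mul_cancel₀ _ hba.ne'
      linear_combination -htb
    have hy2 : (1 - t) * a + t * b = a + b - y := by linarith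
    have h1 := hφ.2 (Set.left_mem_Icc.2 hab) (Set.right_mem_Icc.2 hab) ht0
      (by linarith : (0:ℝ) ≤ 1 - t) hs
    have h2 := hφ.2 (Set.left_mem_Icc.2 hab) (Set.right_mem_Icc.2 hab)
      (by linarith : (0:ℝ) ≤ 1 - t) ht0 (by ring)
    simp only [smul_eq_mul] at h1 h2
    rw [hy1] at h1
    rw [hy2] at h2
    nlinarith [h1, h2]

/-- Discrete Jensen–Mercer inequality, corollary form: if `a ≤ b`, `y₁, …, yₙ ∈ [a,b]`,
the weights `wₖ` are positive and sum to `1`, and `φ` is convex on `[a,b]`, then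
`φ(a + b − ∑ wₖ yₖ) ≤ φ(a) + φ(b) − ∑ wₖ φ(yₖ)`. -/
theorem jensen_mercer_discrete_endpoints
    (a b : ℝ) (hab : a ≤ b)
    (n : ℕ) (y : Fin n → ℝ) (hy : ∀ k, y k ∈ Set.Icc a b)
    (w : Fin n → ℝ) (hw : ∀ k, 0 < w k) (hw1 : ∑ k, w k = 1)
    (φ : ℝ → ℝ) (hφ : ConvexOn ℝ (Set.Icc a b) φ) :
    φ (a + b - ∑ k, w k * y k) ≤ φ a + φ b - ∑ k, w k * φ (y k) := by
  have hmem : ∀ k : Fin n, a + b - y k ∈ Set.Icc a b := fun k =>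
    ⟨by linarith [(hy k).2], by linarith [(hy k).1]⟩
  have hjensen := hφ.map_sum_le (t := Finset.univ) (w := w) (p := fun k => a + b - y k)
    (fun i _ => (hw i).le) hw1 (fun i _ => hmem i)
  simp only [smul_eq_mul] at hjensen
  have hsum : ∑ k, w k * (a + b - y k) = a + b - ∑ k, w k * y k := by
    simp only [mul_sub, mul_add, Finset.sum_sub_distrib, Finset.sum_add_distrib,
      ← Finset.sum_mul, hw1]
    ring
  rw [hsum] at hjensen
  refine hjensen.trans ?_
  have hpt : ∀ k : Fin n, w k * φ (a + b - y k) ≤ w k * (φ a + φ b - φ (y k)) := fun k =>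
    mul_le_mul_of_nonneg_left (by linarith [mercer_pointwise a b hab φ hφ (hy k)]) (hw k).le
  calc ∑ k, w k * φ (a + b - y k) ≤ ∑ k, w k * (φ a + φ b - φ (y k)) :=
        Finset.sum_le_sum fun k _ => hpt k
    _ = φ a + φ b - ∑ k, w k * φ (y k) := by
        simp only [mul_sub, mul_add, Finset.sum_sub_distrib, Finset.sum_add_distrib,
          ← Finset.sum_mul, hw1]
        ring
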